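/- arXiv:2503.18601 — 3 statements merged into one kernel-verified Lean document; each statement's English description precedes it below -/
import Mathlib

section
/- Let f_i : ℝ^{n_i} → ℝ be differentiable and α-strongly convex (α > 0) for i = 1,…,N, let A_i ∈ ℝ^{m×n_i}, c ∈ ℝ^m, ρ > 0, and let P_i ∈ ℝ^{n_i×n_i} be symmetric positive semi-definite. Suppose (x_1*,…,x_N*; λ*) satisfies the KKT conditions ∇f_i(x_i*) = A_iᵀλ* for all i and ∑_{i=1}^N A_i x_i* = c. Suppose x_i⁺ satisfies ∇f_i(x_i⁺) = A_iᵀλ − ρA_iᵀ(A_i x_i⁺ + ∑_{j≠i}A_j x_j − c) + P_i(x_i − x_i⁺) for each i. Set λ̂ := λ − ρ(∑_{i=1}^N A_i x_i⁺ − c). Then ⟨∑_i A_i(x_i⁺ − x_i*), λ̂ − λ*⟩ + ∑_{i=1}^N (x_i⁺ − x_i*)ᵀ(ρA_iᵀA_i + P_i)(x_i − x_i⁺) ≥ α ∑_{i=1}^N ‖x_i⁺ − x_i*‖² + ρ⟨∑_i A_i(x_i⁺ − x_i*), ∑_i A_i(x_i − x_i⁺)⟩. -/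
open Matrix Finset RealInnerProductSpace

/-- Matrix-vector multiplication `A x` as a map between Euclidean spaces. -/
noncomputable def mv {a b : ℕ} (A : Matrix (Fin a) (Fin b) ℝ)
    (x : EuclideanSpace ℝ (Fin b)) : EuclideanSpace ℝ (Fin a) :=
  Matrix.toEuclideanLin A x

/-- Quadratic form `xᵀ M x`. -/
noncomputable def qf {a : ℕ} (M : Matrix (Fin a) (Fin a) ℝ)
    (x : EuclideanSpace ℝ (Fin a)) : ℝ := ⟪x, mv M x⟫

/-- Operator norm of a matrix, viewed as a linear map between Euclidean spaces. -/
noncomputable def opN {a b : ℕ} (A : Matrix (Fin a) (Fin b) ℝ) : ℝ :=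
  ‖(LinearMap.toContinuousLinearMap (Matrix.toEuclideanLin A))‖

lemma inner_eq_dot {a : ℕ} (u v : EuclideanSpace ℝ (Fin a)) : ⟪u, v⟫ = u ⬝ᵥ v := by
  simp [PiLp.inner_apply, dotProduct, mul_comm]

lemma inner_mv_t {a b : ℕ} (A : Matrix (Fin a) (Fin b) ℝ) (u : EuclideanSpace ℝ (Fin b))
    (w : EuclideanSpace ℝ (Fin a)) : ⟪u, mv Aᵀ w⟫ = ⟪mv A u, w⟫ := by
  rw [inner_eq_dot, inner_eq_dot]
  show u ⬝ᵥ Aᵀ.mulVec w = A.mulVec u ⬝ᵥ w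
  rw [Matrix.dotProduct_mulVec, Matrix.vecMul_transpose]

lemma mv_sub {a b : ℕ} (A : Matrix (Fin a) (Fin b) ℝ) (u v : EuclideanSpace ℝ (Fin b)) :
    mv A (u - v) = mv A u - mv A v := map_sub (Matrix.toEuclideanLin A) u v

lemma mv_add {a b : ℕ} (A : Matrix (Fin a) (Fin b) ℝ) (u v : EuclideanSpace ℝ (Fin b)) :
    mv A (u + v) = mv A u + mv A v := map_add (Matrix.toEuclideanLin A) u v

lemma mv_smul {a b : ℕ} (A : Matrix (Fin a) (Fin b) ℝ) (r : ℝ) (u : EuclideanSpace ℝ (Fin b)) :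
    mv A (r • u) = r • mv A u := map_smul (Matrix.toEuclideanLin A) r u

lemma mv_addM {a b : ℕ} (A B : Matrix (Fin a) (Fin b) ℝ) (u : EuclideanSpace ℝ (Fin b)) :
    mv (A + B) u = mv A u + mv B u := by
  show WithLp.toLp 2 ((A + B).mulVec u.ofLp) = WithLp.toLp 2 (A.mulVec u.ofLp + B.mulVec u.ofLp)
  rw [Matrix.add_mulVec]

lemma mv_smulM {a b : ℕ} (r : ℝ) (A : Matrix (Fin a) (Fin b) ℝ) (u : EuclideanSpace ℝ (Fin b)) :
    mv (r • A) u = r • mv A u := by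
  show WithLp.toLp 2 ((r • A).mulVec u.ofLp) = WithLp.toLp 2 (r • A.mulVec u.ofLp)
  rw [Matrix.smul_mulVec]

lemma mv_mul {a b d : ℕ} (A : Matrix (Fin a) (Fin b) ℝ) (B : Matrix (Fin b) (Fin d) ℝ)
    (u : EuclideanSpace ℝ (Fin d)) : mv (A * B) u = mv A (mv B u) := by
  show WithLp.toLp 2 ((A * B).mulVec u.ofLp) = WithLp.toLp 2 (A.mulVec (B.mulVec u.ofLp))
  rw [← Matrix.mulVec_mulVec]

/-- the strong-convexity inequality (3.2)/(eq-1-2) of the analysis. -/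
theorem stmt3 {N m : ℕ} (n : Fin N → ℕ)
    (f : (i : Fin N) → EuclideanSpace ℝ (Fin (n i)) → ℝ)
    (g : (i : Fin N) → EuclideanSpace ℝ (Fin (n i)) → EuclideanSpace ℝ (Fin (n i)))
    (hdiff : ∀ i x, HasGradientAt (f i) (g i x) x)
    (α : ℝ) (hα : 0 < α)
    (hsc : ∀ i x y, f i y ≥ f i x + ⟪y - x, g i x⟫ + α * ‖x - y‖ ^ 2)
    (A : (i : Fin N) → Matrix (Fin m) (Fin (n i)) ℝ)
    (c : EuclideanSpace ℝ (Fin m))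
    (ρ : ℝ) (hρ : 0 < ρ)
    (P : (i : Fin N) → Matrix (Fin (n i)) (Fin (n i)) ℝ)
    (hP : ∀ i, (P i).PosSemidef)
    (xstar : (i : Fin N) → EuclideanSpace ℝ (Fin (n i)))
    (lamstar : EuclideanSpace ℝ (Fin m))
    (hkkt1 : ∀ i, g i (xstar i) = mv (A i)ᵀ lamstar)
    (hkkt2 : ∑ i, mv (A i) (xstar i) = c)
    (x xp : (i : Fin N) → EuclideanSpace ℝ (Fin (n i)))
    (lam : EuclideanSpace ℝ (Fin m))
    (hopt : ∀ i, g i (xp i) = mv (A i)ᵀ lam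
        - ρ • mv (A i)ᵀ (mv (A i) (xp i) + (∑ j ∈ Finset.univ.erase i, mv (A j) (x j)) - c)
        + mv (P i) (x i - xp i)) :
    ⟪∑ i, mv (A i) (xp i - xstar i), (lam - ρ • ((∑ i, mv (A i) (xp i)) - c)) - lamstar⟫
        + ∑ i, ⟪xp i - xstar i, mv (ρ • ((A i)ᵀ * A i) + P i) (x i - xp i)⟫
      ≥ α * ∑ i, ‖xp i - xstar i‖ ^ 2
        + ρ * ⟪∑ i, mv (A i) (xp i - xstar i), ∑ i, mv (A i) (x i - xp i)⟫ := by
  set lhat : EuclideanSpace ℝ (Fin m) := lam - ρ • ((∑ i, mv (A i) (xp i)) - c) with hlhat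
  set T : EuclideanSpace ℝ (Fin m) := ∑ i, mv (A i) (x i - xp i) with hT
  -- strong monotonicity
  have mono : ∀ i, ⟪xp i - xstar i, g i (xp i) - g i (xstar i)⟫
      ≥ 2 * α * ‖xp i - xstar i‖ ^ 2 := by
    intro i
    have h1 := hsc i (xstar i) (xp i)
    have h2 := hsc i (xp i) (xstar i)
    rw [norm_sub_rev] at h1
    rw [show xstar i - xp i = -(xp i - xstar i) from (neg_sub _ _).symm, inner_neg_left] at h2
    rw [inner_sub_right]
    linarith
  -- gradient difference identity
  have hgd : ∀ i, g i (xp i) - g i (xstar i)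
      = mv (A i)ᵀ (lhat - lamstar) + ρ • mv (A i)ᵀ (mv (A i) (x i - xp i))
        + mv (P i) (x i - xp i) - ρ • mv (A i)ᵀ T := by
    intro i
    have hS : (∑ j ∈ Finset.univ.erase i, mv (A j) (x j))
        = (∑ j, mv (A j) (x j)) - mv (A i) (x i) :=
      Finset.sum_erase_eq_sub (Finset.mem_univ i)
    have hT' : T = (∑ j, mv (A j) (x j)) - (∑ j, mv (A j) (xp j)) := by
      rw [hT, ← Finset.sum_sub_distrib]
      exact Finset.sum_congr rfl fun j _ => mv_sub _ _ _
    rw [hopt i, hkkt1 i, hS, hT', hlhat]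
    simp only [mv_sub, mv_add, mv_smul, smul_sub, smul_add]
    abel
  -- per-term inequality
  have hper : ∀ i ∈ Finset.univ, α * ‖xp i - xstar i‖ ^ 2
        + ρ * ⟪mv (A i) (xp i - xstar i), T⟫
      ≤ ⟪mv (A i) (xp i - xstar i), lhat - lamstar⟫
        + ⟪xp i - xstar i, mv (ρ • ((A i)ᵀ * A i) + P i) (x i - xp i)⟫ := by
    intro i _
    have h1 := mono i
    rw [hgd i] at h1
    simp only [mv_addM, mv_smulM, mv_mul, inner_sub_right, inner_add_right,
      real_inner_smul_right, inner_mv_t] at h1 ⊢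
    nlinarith [sq_nonneg ‖xp i - xstar i‖]
  have hsum := Finset.sum_le_sum hper
  rw [ge_iff_le, sum_inner, sum_inner, Finset.mul_sum, Finset.mul_sum,
    ← Finset.sum_add_distrib, ← Finset.sum_add_distrib]
  exact hsum
end

section
/- Let ρ > 0, α > 0, L ≥ 0, N ≥ 1, A_i ∈ ℝ^{m×n_i}, D := ∑_{i=1}^N ‖A_iᵀ‖², and let P_i ∈ ℝ^{n_i×n_i} be symmetric positive semi-definite. If s > 0 satisfies s[ρ²D‖A_i‖² + L/N] < α/(2N) for each i = 1,…,N, then there exists μ_s ∈ (0,1) such that for all i and all x ∈ ℝ^{n_i}: ‖x‖²_{(ρ+4Nsρ²D)A_iᵀA_i + P_i} ≤ μ_s ‖x‖²_{ρA_iᵀA_i + P_i + 2(α−2Ls)I}. -/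
open Matrix Finset RealInnerProductSpace

lemma qf_add {a : ℕ} (M M' : Matrix (Fin a) (Fin a) ℝ) (x : EuclideanSpace ℝ (Fin a)) :
    qf (M + M') x = qf M x + qf M' x := by
  simp [qf, mv, map_add, inner_add_right]

lemma qf_smul {a : ℕ} (c : ℝ) (M : Matrix (Fin a) (Fin a) ℝ) (x : EuclideanSpace ℝ (Fin a)) :
    qf (c • M) x = c * qf M x := by
  simp [qf, mv, _root_.map_smul, inner_smul_right]

lemma qf_one {a : ℕ} (x : EuclideanSpace ℝ (Fin a)) : qf 1 x = ‖x‖ ^ 2 := by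
  simp [qf, mv, Matrix.toEuclideanLin_apply]

lemma qf_transpose_mul {a b : ℕ} (A : Matrix (Fin a) (Fin b) ℝ) (x : EuclideanSpace ℝ (Fin b)) :
    qf (Aᵀ * A) x = ‖mv A x‖ ^ 2 := by
  have h : (Aᵀ : Matrix (Fin b) (Fin a) ℝ) = Aᴴ := by ext i j; simp [conjTranspose]
  rw [qf, mv, h]
  rw [show Matrix.toEuclideanLin (Aᴴ * A) x = Matrix.toEuclideanLin Aᴴ (Matrix.toEuclideanLin A x) by
    simp [Matrix.toEuclideanLin_apply, Matrix.mulVec_mulVec]]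
  rw [Matrix.toEuclideanLin_conjTranspose_eq_adjoint, LinearMap.adjoint_inner_right]
  exact real_inner_self_eq_norm_sq (mv A x)

lemma norm_mv_le {a b : ℕ} (A : Matrix (Fin a) (Fin b) ℝ) (x : EuclideanSpace ℝ (Fin b)) :
    ‖mv A x‖ ≤ opN A * ‖x‖ :=
  (LinearMap.toContinuousLinearMap (Matrix.toEuclideanLin A)).le_opNorm x

lemma qf_nonneg_of_psd {a : ℕ} {M : Matrix (Fin a) (Fin a) ℝ} (hM : M.PosSemidef)
    (x : EuclideanSpace ℝ (Fin a)) : 0 ≤ qf M x := by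
  have := hM.re_dotProduct_nonneg ((WithLp.equiv 2 _) x)
  simpa [qf, mv, Matrix.toEuclideanLin_apply, dotProduct, PiLp.inner_apply,
    RCLike.inner_apply, mul_comm] using this

lemma qf_le {a : ℕ} (M : Matrix (Fin a) (Fin a) ℝ) (x : EuclideanSpace ℝ (Fin a)) :
    qf M x ≤ opN M * ‖x‖ ^ 2 := by
  calc qf M x ≤ ‖x‖ * ‖mv M x‖ := real_inner_le_norm _ _
    _ ≤ ‖x‖ * (opN M * ‖x‖) := by
        exact mul_le_mul_of_nonneg_left (norm_mv_le M x) (norm_nonneg x)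
    _ = opN M * ‖x‖ ^ 2 := by ring

set_option maxHeartbeats 1000000 in
/-- Lemma 3.5 — existence of the contraction factor `μ_s ∈ (0,1)`. -/
theorem stmt9 {N m : ℕ} (hN : 1 ≤ N) (n : Fin N → ℕ)
    (A : (i : Fin N) → Matrix (Fin m) (Fin (n i)) ℝ)
    (P : (i : Fin N) → Matrix (Fin (n i)) (Fin (n i)) ℝ)
    (hP : ∀ i, (P i).PosSemidef)
    (ρ α L D s : ℝ) (hρ : 0 < ρ) (hα : 0 < α) (hL : 0 ≤ L)
    (hD : D = ∑ i, opN (A i)ᵀ ^ 2)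
    (hs : 0 < s)
    (hscond : ∀ i, s * (ρ ^ 2 * D * opN (A i) ^ 2 + L / N) < α / (2 * N)) :
    ∃ μs : ℝ, 0 < μs ∧ μs < 1 ∧ ∀ i, ∀ x : EuclideanSpace ℝ (Fin (n i)),
      qf ((ρ + 4 * N * s * ρ ^ 2 * D) • ((A i)ᵀ * A i) + P i) x
        ≤ μs * qf (ρ • ((A i)ᵀ * A i) + P i
            + (2 * (α - 2 * L * s)) • (1 : Matrix (Fin (n i)) (Fin (n i)) ℝ)) x := by
  haveI : Nonempty (Fin N) := Fin.pos_iff_nonempty.mp (by omega)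
  have hne : (Finset.univ : Finset (Fin N)).Nonempty := univ_nonempty
  have hN' : (1 : ℝ) ≤ N := by exact_mod_cast hN
  have hNpos : (0 : ℝ) < N := by linarith
  have hD0 : 0 ≤ D := hD ▸ Finset.sum_nonneg (fun i _ => sq_nonneg _)
  have hc'0 : 0 ≤ 4 * (N : ℝ) * s * ρ ^ 2 * D := mul_nonneg (by positivity) hD0
  have hcβ : ∀ i, 4 * (N : ℝ) * s * ρ ^ 2 * D * opN (A i) ^ 2 < 2 * (α - 2 * L * s) := by
    intro i
    have h := hscond i
    have h2 : s * (ρ ^ 2 * D * opN (A i) ^ 2) * (2 * N) + s * (L / N) * (2 * N)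
        < α / (2 * N) * (2 * N) := by
      rw [← add_mul, ← mul_add]; exact mul_lt_mul_of_pos_right h (by positivity)
    have hLs : s * (L / N) * (2 * N) = 2 * L * s := by field_simp
    have hαs : α / (2 * N) * (2 * N) = α := by field_simp
    rw [hLs, hαs] at h2
    nlinarith
  obtain ⟨cmax, hcmax⟩ : ∃ v, v = univ.sup' hne
      (fun i => 4 * (N : ℝ) * s * ρ ^ 2 * D * opN (A i) ^ 2) := ⟨_, rfl⟩
  have hBi : ∀ i, 4 * (N : ℝ) * s * ρ ^ 2 * D * opN (A i) ^ 2 ≤ cmax := by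
    intro i; rw [hcmax]
    exact Finset.le_sup' (fun i => 4 * (N : ℝ) * s * ρ ^ 2 * D * opN (A i) ^ 2) (mem_univ i)
  have hcmax0 : 0 ≤ cmax :=
    le_trans (mul_nonneg hc'0 (sq_nonneg _)) (hBi (Classical.arbitrary _))
  have hcmaxβ : cmax < 2 * (α - 2 * L * s) := by
    rw [hcmax]; exact (Finset.sup'_lt_iff hne).mpr (fun i _ => hcβ i)
  have hβ0 : 0 < 2 * (α - 2 * L * s) := lt_of_le_of_lt hcmax0 hcmaxβ
  obtain ⟨CC, hCC⟩ : ∃ v, v = univ.sup' hne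
      (fun i => ρ * opN (A i) ^ 2 + opN (P i) + 2 * (α - 2 * L * s)) := ⟨_, rfl⟩
  have hgi : ∀ i, ρ * opN (A i) ^ 2 + opN (P i) + 2 * (α - 2 * L * s) ≤ CC := by
    intro i; rw [hCC]
    exact Finset.le_sup' (fun i => ρ * opN (A i) ^ 2 + opN (P i) + 2 * (α - 2 * L * s))
      (mem_univ i)
  have hβCC : 2 * (α - 2 * L * s) ≤ CC := by
    set i0 := Classical.arbitrary (Fin N)
    have hPn : (0:ℝ) ≤ opN (P i0) := norm_nonneg _
    nlinarith [hgi i0, sq_nonneg (opN (A i0))]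
  have hCC0 : 0 < CC := lt_of_lt_of_le hβ0 hβCC
  have hd0 : 0 < (2 * (α - 2 * L * s) - cmax) / CC := div_pos (by linarith) hCC0
  have hd1 : (2 * (α - 2 * L * s) - cmax) / CC ≤ 1 := by
    rw [div_le_one hCC0]; linarith
  refine ⟨1 - (2 * (α - 2 * L * s) - cmax) / CC / 2, by linarith, by linarith, ?_⟩
  intro i x
  have hLHS : qf ((ρ + 4 * (N : ℝ) * s * ρ ^ 2 * D) • ((A i)ᵀ * A i) + P i) x
      = (ρ + 4 * (N : ℝ) * s * ρ ^ 2 * D) * ‖mv (A i) x‖ ^ 2 + qf (P i) x := by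
    rw [qf_add, qf_smul, qf_transpose_mul]
  have hRHS : qf (ρ • ((A i)ᵀ * A i) + P i
      + (2 * (α - 2 * L * s)) • (1 : Matrix (Fin (n i)) (Fin (n i)) ℝ)) x
      = ρ * ‖mv (A i) x‖ ^ 2 + qf (P i) x + 2 * (α - 2 * L * s) * ‖x‖ ^ 2 := by
    rw [qf_add, qf_add, qf_smul, qf_smul, qf_transpose_mul, qf_one]
  rw [hLHS, hRHS]
  obtain ⟨t, htdef⟩ : ∃ v, v = ‖mv (A i) x‖ ^ 2 := ⟨_, rfl⟩
  obtain ⟨p, hpdef⟩ : ∃ v, v = qf (P i) x := ⟨_, rfl⟩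
  obtain ⟨u, hudef⟩ : ∃ v, v = ‖x‖ ^ 2 := ⟨_, rfl⟩
  rw [← htdef, ← hpdef, ← hudef]
  have ht0 : 0 ≤ t := htdef ▸ sq_nonneg _
  have hu0 : 0 ≤ u := hudef ▸ sq_nonneg _
  have hp0 : 0 ≤ p := hpdef ▸ qf_nonneg_of_psd (hP i) x
  have ht : t ≤ opN (A i) ^ 2 * u := by
    rw [htdef, hudef, ← mul_pow]
    exact pow_le_pow_left₀ (norm_nonneg _) (norm_mv_le _ _) 2
  have hp : p ≤ opN (P i) * u := by rw [hpdef, hudef]; exact qf_le _ _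
  have hR0 : 0 ≤ ρ * t + p + 2 * (α - 2 * L * s) * u := by nlinarith
  have hRle : ρ * t + p + 2 * (α - 2 * L * s) * u ≤ CC * u := by
    have h1 : ρ * t ≤ ρ * (opN (A i) ^ 2 * u) := mul_le_mul_of_nonneg_left ht hρ.le
    nlinarith [hgi i]
  have hct : 4 * (N : ℝ) * s * ρ ^ 2 * D * t ≤ cmax * u := by
    have h1 : 4 * (N : ℝ) * s * ρ ^ 2 * D * t
        ≤ 4 * (N : ℝ) * s * ρ ^ 2 * D * (opN (A i) ^ 2 * u) :=
      mul_le_mul_of_nonneg_left ht hc'0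
    have h2 := mul_le_mul_of_nonneg_right (hBi i) hu0
    have h3 : 4 * (N : ℝ) * s * ρ ^ 2 * D * (opN (A i) ^ 2 * u)
        = 4 * (N : ℝ) * s * ρ ^ 2 * D * opN (A i) ^ 2 * u := by ring
    linarith
  have hdCC : (2 * (α - 2 * L * s) - cmax) / CC * CC = 2 * (α - 2 * L * s) - cmax :=
    div_mul_cancel₀ _ (ne_of_gt hCC0)
  have key : (ρ + 4 * (N : ℝ) * s * ρ ^ 2 * D) * t + p
      ≤ (1 - (2 * (α - 2 * L * s) - cmax) / CC)
        * (ρ * t + p + 2 * (α - 2 * L * s) * u) := by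
    have h1 : (2 * (α - 2 * L * s) - cmax) / CC * (ρ * t + p + 2 * (α - 2 * L * s) * u)
        ≤ (2 * (α - 2 * L * s) - cmax) / CC * (CC * u) :=
      mul_le_mul_of_nonneg_left hRle hd0.le
    have h2 : (2 * (α - 2 * L * s) - cmax) / CC * (CC * u)
        = (2 * (α - 2 * L * s) - cmax) * u := by rw [← mul_assoc, hdCC]
    nlinarith
  calc (ρ + 4 * (N : ℝ) * s * ρ ^ 2 * D) * t + p
      ≤ (1 - (2 * (α - 2 * L * s) - cmax) / CC)
        * (ρ * t + p + 2 * (α - 2 * L * s) * u) := key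
    _ ≤ (1 - (2 * (α - 2 * L * s) - cmax) / CC / 2)
        * (ρ * t + p + 2 * (α - 2 * L * s) * u) :=
        mul_le_mul_of_nonneg_right (by linarith) hR0
end

section
/- Let 0 < γ < 2, ρ > 0, s > 0, A_i ∈ ℝ^{m×n_i}, and let P_i ∈ ℝ^{n_i×n_i} be symmetric positive semi-definite for i = 1,…,N. Suppose there exist ξ_i > 0 with ∑_{i=1}^N ξ_i < 2 − γ such that for each i the matrix ρA_iᵀA_i + P_i − 8s(ρA_iᵀA_i + P_i)ᵀ(ρA_iᵀA_i + P_i) − (ρ/ξ_i)A_iᵀA_i is positive definite. Then for any vectors x_i, x_i⁺ ∈ ℝ^{n_i} (i = 1,…,N) and λ, λ⁺ ∈ ℝ^m: (1/2)∑_{i=1}^N ‖x_i⁺ − x_i‖²_{ρA_iᵀA_i+P_i} − 4s∑_{i=1}^N ‖(ρA_iᵀA_i + P_i)(x_i⁺ − x_i)‖² + ((2−γ)/(2γ²ρ))‖λ⁺ − λ‖² + (1/γ)⟨λ − λ⁺, ∑_{i=1}^N A_i(x_i − x_i⁺)⟩ ≥ 0. -/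
open Matrix Finset RealInnerProductSpace

lemma dot_self_nonneg' {k : ℕ} (w : Fin k → ℝ) : 0 ≤ w ⬝ᵥ w :=
  Finset.sum_nonneg fun i _ => mul_self_nonneg _

lemma dot_AtA {a b : ℕ} (A : Matrix (Fin a) (Fin b) ℝ) (d : Fin b → ℝ) :
    d ⬝ᵥ (Aᵀ * A) *ᵥ d = (A *ᵥ d) ⬝ᵥ (A *ᵥ d) := by
  rw [← Matrix.mulVec_mulVec, Matrix.dotProduct_mulVec, Matrix.vecMul_transpose]

lemma cross_ineq {a b : ℕ} (A : Matrix (Fin a) (Fin b) ℝ) (u : Fin a → ℝ) (d : Fin b → ℝ)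
    {t : ℝ} (ht : 0 < t) :
    -((t/2) * (u ⬝ᵥ u)) - (1/(2*t)) * (d ⬝ᵥ (Aᵀ * A) *ᵥ d) ≤ u ⬝ᵥ A *ᵥ d := by
  rw [dot_AtA]
  set v := A *ᵥ d with hv
  have h0 : 0 ≤ (t • u + v) ⬝ᵥ (t • u + v) := dot_self_nonneg' _
  have hexp : (t • u + v) ⬝ᵥ (t • u + v)
      = t^2 * (u ⬝ᵥ u) + 2*t*(u ⬝ᵥ v) + v ⬝ᵥ v := by
    simp only [add_dotProduct, dotProduct_add, smul_dotProduct,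
      dotProduct_smul, dotProduct_comm v u, smul_eq_mul]
    ring
  rw [hexp] at h0
  have h2 : (0:ℝ) < 2*t := by linarith
  have h3 : 0 ≤ (t^2 * (u ⬝ᵥ u) + 2*t*(u ⬝ᵥ v) + v ⬝ᵥ v) / (2*t) :=
    div_nonneg h0 (le_of_lt h2)
  have h4 : (t^2 * (u ⬝ᵥ u) + 2*t*(u ⬝ᵥ v) + v ⬝ᵥ v) / (2*t)
      = (t/2) * (u ⬝ᵥ u) + (u ⬝ᵥ v) + (1/(2*t)) * (v ⬝ᵥ v) := by
    field_simp
  rw [h4] at h3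
  linarith

lemma qf_eq_dot {a : ℕ} (M : Matrix (Fin a) (Fin a) ℝ) (v : EuclideanSpace ℝ (Fin a)) :
    qf M v = (WithLp.equiv 2 _ v) ⬝ᵥ M *ᵥ (WithLp.equiv 2 _ v) := by
  rw [qf, mv, EuclideanSpace.inner_eq_star_dotProduct,
    Matrix.ofLp_toEuclideanLin_apply, star_trivial, dotProduct_comm]
  rfl

lemma inner_mv_dot {a b : ℕ} (A : Matrix (Fin a) (Fin b) ℝ)
    (u : EuclideanSpace ℝ (Fin a)) (v : EuclideanSpace ℝ (Fin b)) :
    ⟪u, mv A v⟫ = (WithLp.equiv 2 _ u) ⬝ᵥ A *ᵥ (WithLp.equiv 2 _ v) := by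
  rw [mv, EuclideanSpace.inner_eq_star_dotProduct,
    Matrix.ofLp_toEuclideanLin_apply, star_trivial, dotProduct_comm]
  rfl

lemma norm_sq_dot {a : ℕ} (v : EuclideanSpace ℝ (Fin a)) :
    ‖v‖ ^ 2 = (WithLp.equiv 2 _ v) ⬝ᵥ (WithLp.equiv 2 _ v) := by
  rw [← real_inner_self_eq_norm_sq, EuclideanSpace.inner_eq_star_dotProduct, star_trivial]
  rfl

lemma norm_mv_sq {a b : ℕ} (M : Matrix (Fin a) (Fin b) ℝ) (v : EuclideanSpace ℝ (Fin b)) :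
    ‖mv M v‖ ^ 2 = (WithLp.equiv 2 _ v) ⬝ᵥ (Mᵀ * M) *ᵥ (WithLp.equiv 2 _ v) := by
  rw [norm_sq_dot, mv]
  exact (dot_AtA M _).symm

/-- Lemma 3.6 — nonnegativity of the residual term `H_k - 4s ∑ ‖⋅‖²`. -/
theorem stmt10 {N m : ℕ} (n : Fin N → ℕ)
    (γ ρ s : ℝ) (hγ0 : 0 < γ) (hγ2 : γ < 2) (hρ : 0 < ρ) (hs : 0 < s)
    (A : (i : Fin N) → Matrix (Fin m) (Fin (n i)) ℝ)
    (P : (i : Fin N) → Matrix (Fin (n i)) (Fin (n i)) ℝ)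
    (hP : ∀ i, (P i).PosSemidef)
    (ξ : Fin N → ℝ) (hξ : ∀ i, 0 < ξ i) (hξsum : ∑ i, ξ i < 2 - γ)
    (hmat : ∀ i, (ρ • ((A i)ᵀ * A i) + P i
        - (8 * s) • ((ρ • ((A i)ᵀ * A i) + P i)ᵀ * (ρ • ((A i)ᵀ * A i) + P i))
        - (ρ / ξ i) • ((A i)ᵀ * A i)).PosDef) :
    ∀ (x xp : (i : Fin N) → EuclideanSpace ℝ (Fin (n i)))
      (lam lamp : EuclideanSpace ℝ (Fin m)),
      (1 / 2) * ∑ i, qf (ρ • ((A i)ᵀ * A i) + P i) (xp i - x i)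
          - 4 * s * ∑ i, ‖mv (ρ • ((A i)ᵀ * A i) + P i) (xp i - x i)‖ ^ 2
          + ((2 - γ) / (2 * γ ^ 2 * ρ)) * ‖lamp - lam‖ ^ 2
          + (1 / γ) * ⟪lam - lamp, ∑ i, mv (A i) (x i - xp i)⟫ ≥ 0 := by
  intro x xp lam lamp
  set μ : Fin m → ℝ := WithLp.equiv 2 _ (lamp - lam) with hμ
  set d : (i : Fin N) → Fin (n i) → ℝ := fun i => WithLp.equiv 2 _ (xp i - x i) with hd
  set M : (i : Fin N) → Matrix (Fin (n i)) (Fin (n i)) ℝ :=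
    fun i => ρ • ((A i)ᵀ * A i) + P i with hM
  set a : Fin N → ℝ := fun i => d i ⬝ᵥ (M i) *ᵥ d i with ha
  set b : Fin N → ℝ := fun i => d i ⬝ᵥ ((M i)ᵀ * M i) *ᵥ d i with hb
  set c : Fin N → ℝ := fun i => d i ⬝ᵥ ((A i)ᵀ * A i) *ᵥ d i with hc
  set e : Fin N → ℝ := fun i => μ ⬝ᵥ (A i) *ᵥ d i with he
  set w : ℝ := μ ⬝ᵥ μ with hw
  -- rewrite each piece in dot-product form
  have hq : ∀ i, qf (M i) (xp i - x i) = a i := fun i => qf_eq_dot _ _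
  have hn : ∀ i, ‖mv (M i) (xp i - x i)‖ ^ 2 = b i := fun i => norm_mv_sq _ _
  have hnl : ‖lamp - lam‖ ^ 2 = w := norm_sq_dot _
  have hlam : ⟪lam - lamp, ∑ i, mv (A i) (x i - xp i)⟫ = ∑ i, e i := by
    have h1 : ∀ i, mv (A i) (x i - xp i) = - mv (A i) (xp i - x i) := by
      intro i; rw [mv, mv, ← map_neg]; congr 1; abel
    rw [Finset.sum_congr rfl fun i _ => h1 i, Finset.sum_neg_distrib,
      show lam - lamp = -(lamp - lam) by abel, inner_neg_neg, inner_sum]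
    exact Finset.sum_congr rfl fun i _ => inner_mv_dot _ _ _
  rw [Finset.sum_congr rfl fun i _ => hq i, Finset.sum_congr rfl fun i _ => hn i, hnl, hlam]
  -- per-index inequality
  have hkey : ∀ i, (1/2) * a i - 4*s*(b i) + (1/γ) * e i ≥ -(ξ i/(2*γ^2*ρ)) * w := by
    intro i
    have hξi := hξ i
    have hqd := (hmat i).posSemidef.dotProduct_mulVec_nonneg (d i)
    rw [star_trivial] at hqd
    have hexp : d i ⬝ᵥ ((ρ • ((A i)ᵀ * A i) + P i
        - (8 * s) • ((ρ • ((A i)ᵀ * A i) + P i)ᵀ * (ρ • ((A i)ᵀ * A i) + P i))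
        - (ρ / ξ i) • ((A i)ᵀ * A i)) *ᵥ d i) = a i - (8*s) * b i - (ρ/ξ i) * c i := by
      simp only [Matrix.sub_mulVec, Matrix.smul_mulVec, dotProduct_sub,
        dotProduct_smul, smul_eq_mul, ha, hb, hc, hM]
    rw [hexp] at hqd
    set t : ℝ := ξ i / (γ * ρ) with htdef
    have ht : 0 < t := div_pos hξi (by positivity)
    have hcr := cross_ineq (A i) μ (d i) ht
    have h2 : (1/γ) * e i ≥ -(ξ i/(2*γ^2*ρ)) * w - (ρ/(2*ξ i)) * c i := by
      have := mul_le_mul_of_nonneg_left hcr (le_of_lt (by positivity : (0:ℝ) < 1/γ))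
      have heq : (1/γ) * (-((t/2) * w) - (1/(2*t)) * c i)
          = -(ξ i/(2*γ^2*ρ)) * w - (ρ/(2*ξ i)) * c i := by
        rw [htdef]
        field_simp
      rw [heq] at this
      exact this
    have h3 : (1/2) * a i - 4*s*(b i) ≥ (ρ/(2*ξ i)) * c i := by
      have : ρ/(2*ξ i) = (ρ/ξ i)/2 := by ring
      rw [this]; linarith
    linarith
  have hsum : ∑ i, ((1/2) * a i - 4*s*(b i) + (1/γ) * e i)
      ≥ ∑ i : Fin N, (-(ξ i/(2*γ^2*ρ)) * w) :=
    Finset.sum_le_sum fun i _ => hkey i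
  have hsplit : (1/2) * ∑ i, a i - 4*s * ∑ i, b i + ((2-γ)/(2*γ^2*ρ)) * w + (1/γ) * ∑ i, e i
      = (∑ i, ((1/2) * a i - 4*s*(b i) + (1/γ) * e i)) + ((2-γ)/(2*γ^2*ρ)) * w := by
    rw [Finset.sum_add_distrib, Finset.sum_sub_distrib, ← Finset.mul_sum, ← Finset.mul_sum,
      ← Finset.mul_sum]
    ring
  have hsum2 : ∑ i : Fin N, (-(ξ i/(2*γ^2*ρ)) * w) = -((∑ i, ξ i)/(2*γ^2*ρ)) * w := by
    rw [← Finset.sum_mul]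
    congr 1
    rw [Finset.sum_neg_distrib, Finset.sum_div]
  have hw0 : 0 ≤ w := dot_self_nonneg' μ
  have hfin : 0 ≤ ((2-γ) - ∑ i, ξ i)/(2*γ^2*ρ) * w := by
    apply mul_nonneg (div_nonneg (by linarith) (by positivity)) hw0
  have hco : ((2-γ) - ∑ i, ξ i)/(2*γ^2*ρ) * w
      = ((2-γ)/(2*γ^2*ρ)) * w + (-((∑ i, ξ i)/(2*γ^2*ρ)) * w) := by ring
  rw [hsum2] at hsum
  linarith [hsplit, hsum, hfin, hco]
end
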